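/- Let Ψ = (E, Δ) be a pure ordered complex satisfying the quasi-exchange axiom. For every facet B there exists b ∈ IP(B) and a facet B' such that IP(B') = IP(B) \ {b}, provided B ≠ B₀. Consequently the internal order on the facets, graded by |IP(B)|, is graded. -/

import Mathlib

variable {α : Type*} [LinearOrder α] [DecidableEq α] [Fintype α]

/-- A (abstract) simplicial complex: a downward closed family of finite sets. -/
def IsComplex (Δ : Finset α → Prop) : Prop :=
  ∀ ⦃s t : Finset α⦄, Δ t → s ⊆ t → Δ s

/-- A simplicial complex with all faces contained in the ground set `E`. -/
def IsComplexOn (E : Finset α) (Δ : Finset α → Prop) : Prop :=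
  (∀ ⦃s⦄, Δ s → s ⊆ E) ∧ IsComplex Δ

/-- A facet (basis): a maximal face. -/
def IsFacet (Δ : Finset α → Prop) (B : Finset α) : Prop :=
  Δ B ∧ ∀ ⦃C⦄, Δ C → B ⊆ C → B = C

/-- A circuit with respect to the ground set `E`: a minimal non-face contained in `E`. -/
def IsCircuitOn (E : Finset α) (Δ : Finset α → Prop) (C : Finset α) : Prop :=
  C ⊆ E ∧ ¬ Δ C ∧ ∀ ⦃D⦄, D ⊂ C → Δ D

/-- A circuit: a minimal non-face. -/
def IsCircuit (Δ : Finset α → Prop) (C : Finset α) : Prop :=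
  ¬ Δ C ∧ ∀ ⦃D⦄, D ⊂ C → Δ D

/-- Purity: all facets have the same cardinality. -/
def IsPure (Δ : Finset α → Prop) : Prop :=
  ∀ ⦃B B'⦄, IsFacet Δ B → IsFacet Δ B' → B.card = B'.card

/-- Lexicographic order on finite sets, comparing sorted element lists:
`B <lex B'` iff the minimum of the symmetric difference lies in `B`. -/
def lexLt (B B' : Finset α) : Prop :=
  ∃ a ∈ B \ B', ∀ b ∈ symmDiff B B', a ≤ b

def lexLe (B B' : Finset α) : Prop := B = B' ∨ lexLt B B'

/-- `B₀` is the lexicographically smallest facet of `Δ`. -/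
def IsLexMinFacet (Δ : Finset α → Prop) (B₀ : Finset α) : Prop :=
  IsFacet Δ B₀ ∧ ∀ ⦃B⦄, IsFacet Δ B → lexLe B₀ B

/-- Gale (componentwise) order: the `i`-th smallest element of `B` is at most
the `i`-th smallest element of `B'`, for all `i` (in particular equal cardinalities). -/
def galeLe (B B' : Finset α) : Prop :=
  List.Forall₂ (· ≤ ·) (Finset.sort B (· ≤ ·)) (Finset.sort B' (· ≤ ·))

/-- Quasi-exchange axiom (without the purity requirement). -/
def QE (Δ : Finset α → Prop) : Prop :=
  ∀ ⦃B₁ B₂⦄, IsFacet Δ B₁ → IsFacet Δ B₂ →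
    ∀ b₁ ∈ B₁ \ B₂, (∀ b ∈ B₂ \ B₁, b < b₁) →
      ∃ b₂ ∈ B₂ \ B₁, IsFacet Δ (insert b₂ (B₁.erase b₁))

/-- Quasi-circuit axiom (with circuits taken relative to the ground set `E`). -/
def QCon (E : Finset α) (Δ : Finset α → Prop) : Prop :=
  ∀ ⦃C₁ C₂⦄, IsCircuitOn E Δ C₁ → IsCircuitOn E Δ C₂ → C₁ ≠ C₂ →
    ∀ c ∈ C₁ ∩ C₂, (∃ m ∈ symmDiff C₁ C₂, c < m) →
      ∃ C₃, IsCircuitOn E Δ C₃ ∧ C₃ ⊆ (C₁ ∪ C₂).erase c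

/-- Quasi-circuit axiom (circuits are arbitrary minimal non-faces). -/
def QC (Δ : Finset α → Prop) : Prop :=
  ∀ ⦃C₁ C₂⦄, IsCircuit Δ C₁ → IsCircuit Δ C₂ → C₁ ≠ C₂ →
    ∀ c ∈ C₁ ∩ C₂, (∃ m ∈ symmDiff C₁ C₂, c < m) →
      ∃ C₃, IsCircuit Δ C₃ ∧ C₃ ⊆ (C₁ ∪ C₂).erase c

/-- `b` is an internally passive element of the facet `B`. -/
def InternallyPassive (Δ : Finset α → Prop) (B : Finset α) (b : α) : Prop :=
  b ∈ B ∧ ∃ b', b' < b ∧ b' ∉ B ∧ IsFacet Δ (insert b' (B.erase b))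

/-- Contraction of a face `I`. -/
def contract (Δ : Finset α → Prop) (I : Finset α) : Finset α → Prop :=
  fun J => Disjoint J I ∧ Δ (J ∪ I)

/-- Quasi-independence axiom: `Δ` is pure and for faces `I₁, I₂` with `|I₁| > |I₂|`,
if `I₁ \ I ⊆ B_{I,0}` for some `I ⊆ I₁ ∩ I₂`, then some `e ∈ I₁ \ I₂` extends `I₂`. -/
def QI (Δ : Finset α → Prop) : Prop :=
  IsPure Δ ∧ ∀ ⦃I₁ I₂ : Finset α⦄, Δ I₁ → Δ I₂ → I₂.card < I₁.card →
    (∃ I, I ⊆ I₁ ∩ I₂ ∧ ∃ B, IsLexMinFacet (contract Δ I) B ∧ I₁ \ I ⊆ B) →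
    ∃ e ∈ I₁ \ I₂, Δ (insert e I₂)

/-- The First Basis Property. -/
inductive FBP : (Finset α → Prop) → Prop
  | rank1 (Δ : Finset α → Prop) (h : ∀ s, Δ s → s.card ≤ 1) : FBP Δ
  | unique (Δ : Finset α → Prop) (B : Finset α) (hB : IsFacet Δ B)
      (hu : ∀ B', IsFacet Δ B' → B' = B) : FBP Δ
  | step (Δ : Finset α → Prop) (B₀ : Finset α) (h₀ : IsLexMinFacet Δ B₀)
      (h1 : ∀ v, Δ {v} → v ∉ B₀ → FBP (contract Δ {v}))
      (h2 : ∀ v, Δ {v} → v ∉ B₀ →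
        ∃ Bv, IsLexMinFacet (contract Δ {v}) Bv ∧ Bv ⊆ B₀) :
      FBP Δ

/-- Weight of an element: the number of elements below it (plus one). -/
def auxWt (a : α) : ℕ := (Finset.univ.filter (· ≤ a)).card

lemma auxWt_lt_auxWt {a b : α} (h : a < b) : auxWt a < auxWt b := by
  apply Finset.card_lt_card
  constructor
  · intro y hy
    simp only [Finset.mem_filter, Finset.mem_univ, true_and] at hy ⊢
    exact hy.trans h.le
  · intro hsub
    have hb : b ∈ Finset.univ.filter (· ≤ b) := by simp
    have := hsub hb
    simp only [Finset.mem_filter, Finset.mem_univ, true_and] at this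
    exact absurd this (not_le_of_gt h)

/-- Total weight of a finite set. -/
def auxM (F : Finset α) : ℕ := ∑ a ∈ F, auxWt a

lemma auxM_exchange {F : Finset α} {g g' : α} (hg : g ∈ F) (hg' : g' ∉ F)
    (h : g' < g) : auxM (insert g' (F.erase g)) < auxM F := by
  have h1 : g' ∉ F.erase g := fun hx => hg' (Finset.mem_of_mem_erase hx)
  have e1 : auxM (insert g' (F.erase g)) = auxWt g' + auxM (F.erase g) :=
    Finset.sum_insert h1
  have e2 : auxM F = auxWt g + auxM (F.erase g) := by
    rw [auxM, ← Finset.add_sum_erase _ _ hg]; rfl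
  rw [e1, e2]
  exact Nat.add_lt_add_right (auxWt_lt_auxWt h) _

section Facts

variable {Δ : Finset α → Prop}

lemma mem_exchange_of_mem {F : Finset α} {g g' y : α} (hy : y ∈ F) (hne : y ≠ g) :
    y ∈ insert g' (F.erase g) :=
  Finset.mem_insert_of_mem (Finset.mem_erase.2 ⟨hne, hy⟩)

lemma mem_of_mem_exchange {F : Finset α} {g g' y : α}
    (hy : y ∈ insert g' (F.erase g)) (hne : y ≠ g') : y ∈ F ∧ y ≠ g := by
  rcases Finset.mem_insert.1 hy with h | h
  · exact absurd h hne
  · exact ⟨Finset.mem_of_mem_erase h, (Finset.mem_erase.1 h).1⟩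

/-- Fact 1: internally passive elements above the exchanged element persist. -/
lemma fact_persist (hQE : QE Δ) {F : Finset α} {g g' : α}
    (hgF : g ∈ F) (hg'F : g' ∉ F) (hlt : g' < g)
    (hF' : IsFacet Δ (insert g' (F.erase g)))
    {x : α} (hx : InternallyPassive Δ F x) (hgx : g < x) :
    InternallyPassive Δ (insert g' (F.erase g)) x := by
  obtain ⟨hxF, c, hcx, hcF, hD⟩ := hx
  set F' := insert g' (F.erase g) with hF'def
  have hxg : x ≠ g := fun h => (h ▸ hgx).false
  have hxF' : x ∈ F' := mem_exchange_of_mem hxF hxg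
  have hxg' : x ≠ g' := fun h => absurd (h ▸ (hlt.trans hgx)) (lt_irrefl _)
  -- x ∈ F' \ D
  have hxD : x ∉ insert c (F.erase x) := by
    intro h
    rcases Finset.mem_insert.1 h with h | h
    · exact absurd (h ▸ hcx) (lt_irrefl _)
    · exact absurd rfl (Finset.mem_erase.1 h).1
  have hmemsd : x ∈ F' \ insert c (F.erase x) := Finset.mem_sdiff.2 ⟨hxF', hxD⟩
  have hbound : ∀ y ∈ insert c (F.erase x) \ F', y < x := by
    intro y hy
    obtain ⟨hy1, hy2⟩ := Finset.mem_sdiff.1 hy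
    rcases Finset.mem_insert.1 hy1 with h | h
    · exact h ▸ hcx
    · obtain ⟨hyx, hyF⟩ := Finset.mem_erase.1 h
      by_cases hyg : y = g
      · exact hyg ▸ hgx
      · exact absurd (mem_exchange_of_mem hyF hyg) hy2
  obtain ⟨b₂, hb₂, hfac⟩ := hQE hF' hD x hmemsd hbound
  obtain ⟨hb₂C, hb₂F'⟩ := Finset.mem_sdiff.1 hb₂
  exact ⟨hxF', b₂, hbound b₂ hb₂, hb₂F', hfac⟩

/-- Fact 2: if `g'` is the minimal exchange, it is not internally passive in `F'`. -/
lemma fact_new_active {F : Finset α} {g g' : α}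
    (hgF : g ∈ F) (hg'F : g' ∉ F) (hlt : g' < g)
    (hmin : ∀ y, y < g' → y ∉ F → ¬ IsFacet Δ (insert y (F.erase g))) :
    ¬ InternallyPassive Δ (insert g' (F.erase g)) g' := by
  rintro ⟨_, c, hcg', hcF', hfac⟩
  have h1 : g' ∉ F.erase g := fun hx => hg'F (Finset.mem_of_mem_erase hx)
  rw [Finset.erase_insert h1] at hfac
  have hcF : c ∉ F := by
    intro hcF
    have hcg : c ≠ g := fun h => absurd (h ▸ (hcg'.trans hlt)) (lt_irrefl _)
    exact hcF' (mem_exchange_of_mem hcF hcg)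
  exact hmin c hcg' hcF hfac

/-- Fact 3: an internally passive element of `F'` above `g'` (other than `g'`)
was already internally passive in `F`. -/
lemma fact_old_passive (hQE : QE Δ) {F : Finset α} {g g' : α}
    (hF : IsFacet Δ F) (hgF : g ∈ F) (hg'F : g' ∉ F) (hlt : g' < g)
    {x : α} (hx : InternallyPassive Δ (insert g' (F.erase g)) x)
    (hxg' : g' < x) : InternallyPassive Δ F x := by
  obtain ⟨hxF', c, hcx, hcF', hC⟩ := hx
  set F' := insert g' (F.erase g) with hF'def
  obtain ⟨hxF, hxg⟩ := mem_of_mem_exchange hxF' (ne_of_gt hxg')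
  have hxC : x ∉ insert c (F'.erase x) := by
    intro h
    rcases Finset.mem_insert.1 h with h | h
    · exact absurd (h ▸ hcx) (lt_irrefl _)
    · exact absurd rfl (Finset.mem_erase.1 h).1
  have hmemsd : x ∈ F \ insert c (F'.erase x) := Finset.mem_sdiff.2 ⟨hxF, hxC⟩
  have hbound : ∀ y ∈ insert c (F'.erase x) \ F, y < x := by
    intro y hy
    obtain ⟨hy1, hy2⟩ := Finset.mem_sdiff.1 hy
    rcases Finset.mem_insert.1 hy1 with h | h
    · exact h ▸ hcx
    · obtain ⟨hyx, hyF'⟩ := Finset.mem_erase.1 h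
      by_cases hyg' : y = g'
      · exact hyg' ▸ hxg'
      · exact absurd (mem_of_mem_exchange hyF' hyg').1 hy2
  obtain ⟨b₂, hb₂, hfac⟩ := hQE hF hC x hmemsd hbound
  obtain ⟨hb₂C, hb₂F⟩ := Finset.mem_sdiff.1 hb₂
  exact ⟨hxF, b₂, hbound b₂ hb₂, hb₂F, hfac⟩

/-- Lemma A: any facet other than the lex-min facet has an internally
passive element. -/
lemma exists_passive (hpure : IsPure Δ) (hQE : QE Δ) {B₀ : Finset α}
    (hB₀ : IsLexMinFacet Δ B₀) {B : Finset α} (hB : IsFacet Δ B) (hne : B ≠ B₀) :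
    ∃ b, InternallyPassive Δ B b := by
  have hcard : B.card = B₀.card := hpure hB hB₀.1
  have h1 : (B \ B₀).Nonempty := by
    rw [Finset.sdiff_nonempty]
    intro hsub
    exact hne (Finset.eq_of_subset_of_card_le hsub (le_of_eq hcard.symm))
  have h2 : (B₀ \ B).Nonempty := by
    rw [Finset.sdiff_nonempty]
    intro hsub
    exact hne (Finset.eq_of_subset_of_card_le hsub (le_of_eq hcard)).symm
  set M := (B \ B₀).max' h1 with hMdef
  set M₀ := (B₀ \ B).max' h2 with hM₀def
  have hMmem : M ∈ B \ B₀ := (B \ B₀).max'_mem h1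
  have hM₀mem : M₀ ∈ B₀ \ B := (B₀ \ B).max'_mem h2
  have hMne : M ≠ M₀ := by
    intro h
    exact (Finset.mem_sdiff.1 hM₀mem).2 (h ▸ (Finset.mem_sdiff.1 hMmem).1)
  have hM : M₀ < M := by
    rcases lt_or_gt_of_ne hMne with h | h
    · -- M < M₀ : contradiction with lex-minimality of B₀
      exfalso
      have hball : ∀ y ∈ B \ B₀, y < M₀ :=
        fun y hy => lt_of_le_of_lt ((B \ B₀).le_max' y hy) h
      obtain ⟨b₂, hb₂, hC⟩ := hQE hB₀.1 hB M₀ hM₀mem hball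
      obtain ⟨hb₂B, hb₂B₀⟩ := Finset.mem_sdiff.1 hb₂
      set C := insert b₂ (B₀.erase M₀) with hCdef
      have hM₀C : M₀ ∉ C := by
        intro hmem
        rcases Finset.mem_insert.1 hmem with hh | hh
        · exact hb₂B₀ (hh ▸ (Finset.mem_sdiff.1 hM₀mem).1)
        · exact absurd rfl (Finset.mem_erase.1 hh).1
      rcases hB₀.2 hC with heq | hlex
      · exact hM₀C (heq ▸ (Finset.mem_sdiff.1 hM₀mem).1)
      · obtain ⟨a, ha, hall⟩ := hlex
        obtain ⟨haB₀, haC⟩ := Finset.mem_sdiff.1 ha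
        have haM₀ : a = M₀ := by
          by_contra hne'
          exact haC (Finset.mem_insert_of_mem (Finset.mem_erase.2 ⟨hne', haB₀⟩))
        have hb₂sd : b₂ ∈ symmDiff B₀ C := by
          rw [Finset.mem_symmDiff]
          exact Or.inr ⟨Finset.mem_insert_self _ _, hb₂B₀⟩
        have := hall b₂ hb₂sd
        rw [haM₀] at this
        exact absurd (this.trans_lt (hball b₂ hb₂)) (lt_irrefl _)
    · exact h
  have hball : ∀ y ∈ B₀ \ B, y < M :=
    fun y hy => lt_of_le_of_lt ((B₀ \ B).le_max' y hy) hM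
  obtain ⟨b₂, hb₂, hfac⟩ := hQE hB hB₀.1 M hMmem hball
  obtain ⟨hb₂B₀, hb₂B⟩ := Finset.mem_sdiff.1 hb₂
  exact ⟨M, (Finset.mem_sdiff.1 hMmem).1, b₂, hball b₂ hb₂, hb₂B, hfac⟩

/-- The descent lemma: if `T` is contained in `IP(F)` and every element of
`IP(F) \ T` is smaller than every element of `T`, then some facet `F'` has
`IP(F') = T` exactly. -/
lemma descent (hQE : QE Δ) :
    ∀ (n : ℕ) (F : Finset α), auxM F = n → IsFacet Δ F →
    ∀ T : Finset α, (∀ t ∈ T, InternallyPassive Δ F t) →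
    (∀ s, InternallyPassive Δ F s → s ∉ T → ∀ t ∈ T, s < t) →
    ∃ F', IsFacet Δ F' ∧ ∀ x, InternallyPassive Δ F' x ↔ x ∈ T := by
  intro n
  induction n using Nat.strong_induction_on with
  | _ n ih =>
    intro F hn hF T hT hinv
    classical
    by_cases hdone : ∀ x, InternallyPassive Δ F x ↔ x ∈ T
    · exact ⟨F, hF, hdone⟩
    -- there is a junk element
    push_neg at hdone
    obtain ⟨x₀, hx₀⟩ := hdone
    have hjunk : ∃ s, InternallyPassive Δ F s ∧ s ∉ T := by
      rcases hx₀ with ⟨h1, h2⟩ | ⟨h1, h2⟩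
      · exact ⟨x₀, h1, h2⟩
      · exact absurd (hT x₀ h2) h1
    set J : Finset α := Finset.univ.filter
      (fun s => InternallyPassive Δ F s ∧ s ∉ T) with hJdef
    have hJne : J.Nonempty := by
      obtain ⟨s, hs1, hs2⟩ := hjunk
      exact ⟨s, Finset.mem_filter.2 ⟨Finset.mem_univ _, hs1, hs2⟩⟩
    set g := J.min' hJne with hgdef
    have hgJ : g ∈ J := J.min'_mem hJne
    have hgIP : InternallyPassive Δ F g := (Finset.mem_filter.1 hgJ).2.1
    have hgT : g ∉ T := (Finset.mem_filter.1 hgJ).2.2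
    have hgmin : ∀ s, InternallyPassive Δ F s → s ≠ g → g < s := by
      intro s hs hsne
      by_cases hsT : s ∈ T
      · exact hinv g hgIP hgT s hsT
      · exact lt_of_le_of_ne
          (J.min'_le s (Finset.mem_filter.2 ⟨Finset.mem_univ _, hs, hsT⟩))
          (Ne.symm hsne)
    obtain ⟨hgF, w, hwg, hwF, hwfac⟩ := hgIP
    set W : Finset α := Finset.univ.filter
      (fun y => y < g ∧ y ∉ F ∧ IsFacet Δ (insert y (F.erase g))) with hWdef
    have hWne : W.Nonempty :=
      ⟨w, Finset.mem_filter.2 ⟨Finset.mem_univ _, hwg, hwF, hwfac⟩⟩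
    set g' := W.min' hWne with hg'def
    have hg'W : g' ∈ W := W.min'_mem hWne
    have hg'g : g' < g := (Finset.mem_filter.1 hg'W).2.1
    have hg'F : g' ∉ F := (Finset.mem_filter.1 hg'W).2.2.1
    have hF' : IsFacet Δ (insert g' (F.erase g)) := (Finset.mem_filter.1 hg'W).2.2.2
    have hg'min : ∀ y, y < g' → y ∉ F → ¬ IsFacet Δ (insert y (F.erase g)) := by
      intro y hy1 hy2 hy3
      have : g' ≤ y := W.min'_le y
        (Finset.mem_filter.2 ⟨Finset.mem_univ _, hy1.trans hg'g, hy2, hy3⟩)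
      exact absurd (this.trans_lt hy1) (lt_irrefl _)
    set F' := insert g' (F.erase g) with hF'def
    have hmlt : auxM F' < n := hn ▸ auxM_exchange hgF hg'F hg'g
    -- verify hypotheses for F'
    have hT' : ∀ t ∈ T, InternallyPassive Δ F' t := by
      intro t ht
      have htg : t ≠ g := fun h => hgT (h ▸ ht)
      exact fact_persist hQE hgF hg'F hg'g hF' (hT t ht) (hgmin t (hT t ht) htg)
    have hinv' : ∀ s, InternallyPassive Δ F' s → s ∉ T → ∀ t ∈ T, s < t := by
      intro s hs hsT t ht
      have hsg' : s ≠ g' := fun h =>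
        fact_new_active hgF hg'F hg'g hg'min (by rwa [h] at hs)
      have hgt : g < t := hgmin t (hT t ht) (fun h => hgT (h ▸ ht))
      rcases lt_or_gt_of_ne hsg' with hlt | hgt'
      · exact hlt.trans (hg'g.trans hgt)
      · have hsF : InternallyPassive Δ F s :=
          fact_old_passive hQE hF hgF hg'F hg'g hs hgt'
        exact hinv s hsF hsT t ht
    exact ih (auxM F') hmlt F' rfl hF' T hT' hinv'

end Facts

/-- in a pure complex satisfying the quasi-exchange axiom, any facet
`B ≠ B₀` admits `b ∈ IP(B)` and a facet `B'` with `IP(B') = IP(B) \ {b}`. -/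
theorem stmt12 (E : Finset α) (Δ : Finset α → Prop) (hΔ : IsComplexOn E Δ)
    (hpure : IsPure Δ) (hQE : QE Δ) (B₀ : Finset α) (hB₀ : IsLexMinFacet Δ B₀)
    (B : Finset α) (hB : IsFacet Δ B) (hne : B ≠ B₀) :
    ∃ b, InternallyPassive Δ B b ∧
      ∃ B', IsFacet Δ B' ∧
        ∀ x, (InternallyPassive Δ B' x ↔ InternallyPassive Δ B x ∧ x ≠ b) := by
  classical
  obtain ⟨b₁, hb₁⟩ := exists_passive hpure hQE hB₀ hB hne
  set IPs : Finset α := Finset.univ.filter (fun x => InternallyPassive Δ B x)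
    with hIPdef
  have hIPne : IPs.Nonempty :=
    ⟨b₁, Finset.mem_filter.2 ⟨Finset.mem_univ _, hb₁⟩⟩
  set b := IPs.min' hIPne with hbdef
  have hbIP : InternallyPassive Δ B b := (Finset.mem_filter.1 (IPs.min'_mem hIPne)).2
  set T := IPs.erase b with hTdef
  have hT : ∀ t ∈ T, InternallyPassive Δ B t :=
    fun t ht => (Finset.mem_filter.1 (Finset.mem_of_mem_erase ht)).2
  have hinv : ∀ s, InternallyPassive Δ B s → s ∉ T → ∀ t ∈ T, s < t := by
    intro s hs hsT t ht
    have hsIP : s ∈ IPs := Finset.mem_filter.2 ⟨Finset.mem_univ _, hs⟩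
    have hsb : s = b := by
      by_contra h
      exact hsT (Finset.mem_erase.2 ⟨h, hsIP⟩)
    obtain ⟨htb, htIP⟩ := Finset.mem_erase.1 ht
    exact hsb ▸ lt_of_le_of_ne (IPs.min'_le t htIP) (Ne.symm htb)
  obtain ⟨B', hB', hiff⟩ := descent hQE (auxM B) B rfl hB T hT hinv
  refine ⟨b, hbIP, B', hB', fun x => ?_⟩
  rw [hiff x, hTdef, Finset.mem_erase, hIPdef, Finset.mem_filter]
  constructor
  · rintro ⟨h1, _, h2⟩
    exact ⟨h2, h1⟩
  · rintro ⟨h1, h2⟩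
    exact ⟨h2, Finset.mem_univ _, h1⟩
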